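/- Let ψ(j) > 0 for j ≥ 1 with ψ(1) = 1, and define a probability on binary fragmentation trees of [n] by P(T = t) = (1/w(n)) Π_{A ∈ t} ψ(#A) where w(n) = Σ_{t ∈ B_[n]} Π_{A ∈ t} ψ(#A). Then this model is Markovian with splitting rule of Gibbs form p(i,j) = w(i)w(j)/Z(i+j) where Z(m) = w(m)/ψ(m). -/

import Mathlib

open Finset

/-- `t` is a binary fragmentation (hierarchy) of the finite set `B`:
a laminar family of nonempty subsets of `B` containing `B`, in which every
member with at least two elements splits into exactly two disjoint nonempty
members (its two children), recursively down to singletons. -/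
def IsBinFrag (B : Finset ℕ) (t : Finset (Finset ℕ)) : Prop :=
  B ∈ t ∧ (∀ A ∈ t, A.Nonempty ∧ A ⊆ B) ∧
  (∀ C ∈ t, ∀ D ∈ t, C ⊆ D ∨ D ⊆ C ∨ Disjoint C D) ∧
  (∀ b ∈ B, {b} ∈ t) ∧
  (∀ A ∈ t, 2 ≤ A.card →
    ∃ C ∈ t, ∃ D ∈ t, Disjoint C D ∧ C ∪ D = A ∧ C.Nonempty ∧ D.Nonempty)

-- The (finite) set of all binary fragmentations of `B`.
open scoped Classical in
noncomputable def allBinFrags (B : Finset ℕ) : Finset (Finset (Finset ℕ)) :=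
  B.powerset.powerset.filter (fun t => IsBinFrag B t)

/-- `ch` assigns to each internal vertex `A` of the fragmentation `t` its
two children `(ch A).1`, `(ch A).2`. -/
def IsChildFun (t : Finset (Finset ℕ)) (ch : Finset ℕ → Finset ℕ × Finset ℕ) : Prop :=
  ∀ A ∈ t, 2 ≤ A.card →
    (ch A).1 ∈ t ∧ (ch A).2 ∈ t ∧ Disjoint (ch A).1 (ch A).2 ∧
    (ch A).1 ∪ (ch A).2 = A ∧ (ch A).1.Nonempty ∧ (ch A).2.Nonempty

lemma binfrag_singleton (c : ℕ) : IsBinFrag {c} {{c}} := by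
  refine ⟨Finset.mem_singleton_self _, ?_, ?_, ?_, ?_⟩
  · intro A hA; rw [Finset.mem_singleton] at hA; subst hA
    exact ⟨Finset.singleton_nonempty _, subset_rfl⟩
  · intro C hC D hD; rw [Finset.mem_singleton] at hC hD; subst hC; subst hD
    exact Or.inl subset_rfl
  · intro b hb; rw [Finset.mem_singleton] at hb; subst hb
    exact Finset.mem_singleton_self _
  · intro A hA h2; rw [Finset.mem_singleton] at hA; subst hA
    simp at h2

lemma exists_binfrag : ∀ B : Finset ℕ, B.Nonempty → ∃ t, IsBinFrag B t := by
  intro B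
  induction B using Finset.strongInduction with
  | _ B ih =>
    intro hB
    obtain ⟨b, hb⟩ := hB
    by_cases hcard : B.card = 1
    · obtain ⟨c, rfl⟩ := Finset.card_eq_one.mp hcard
      exact ⟨{{c}}, binfrag_singleton c⟩
    · have hc2 : 2 ≤ B.card := by
        have := Finset.card_pos.mpr ⟨b, hb⟩; omega
      have hB'ss : B.erase b ⊂ B := Finset.erase_ssubset hb
      have hB'ne : (B.erase b).Nonempty := by
        rw [← Finset.card_pos, Finset.card_erase_of_mem hb]; omega
      obtain ⟨t', h1, h2, h3, h4, h5⟩ := ih (B.erase b) hB'ss hB'ne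
      refine ⟨insert B (insert {b} t'), ?_, ?_, ?_, ?_, ?_⟩
      · exact Finset.mem_insert_self _ _
      · intro A hA
        rcases Finset.mem_insert.mp hA with rfl | hA
        · exact ⟨⟨b, hb⟩, subset_rfl⟩
        rcases Finset.mem_insert.mp hA with rfl | hA
        · exact ⟨Finset.singleton_nonempty _, Finset.singleton_subset_iff.mpr hb⟩
        · exact ⟨(h2 A hA).1, (h2 A hA).2.trans (Finset.erase_subset _ _)⟩
      · intro C hC D hD
        have hsubB : ∀ A ∈ insert B (insert {b} t'), A ⊆ B := by
          intro A hA
          rcases Finset.mem_insert.mp hA with rfl | hA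
          · exact subset_rfl
          rcases Finset.mem_insert.mp hA with rfl | hA
          · exact Finset.singleton_subset_iff.mpr hb
          · exact (h2 A hA).2.trans (Finset.erase_subset _ _)
        rcases Finset.mem_insert.mp hC with rfl | hC
        · exact Or.inr (Or.inl (hsubB D hD))
        rcases Finset.mem_insert.mp hD with rfl | hD
        · exact Or.inl (hsubB C hC)
        rcases Finset.mem_insert.mp hC with rfl | hC
        · rcases Finset.mem_insert.mp hD with rfl | hD
          · exact Or.inl subset_rfl
          · refine Or.inr (Or.inr (Finset.disjoint_singleton_left.mpr ?_))
            intro hbD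
            exact (Finset.mem_erase.mp ((h2 D hD).2 hbD)).1 rfl
        rcases Finset.mem_insert.mp hD with rfl | hD
        · refine Or.inr (Or.inr (Finset.disjoint_singleton_right.mpr ?_))
          intro hbC
          exact (Finset.mem_erase.mp ((h2 C hC).2 hbC)).1 rfl
        · exact h3 C hC D hD
      · intro b' hb'
        by_cases hbb : b' = b
        · subst hbb; exact Finset.mem_insert.mpr (Or.inr (Finset.mem_insert_self _ _))
        · exact Finset.mem_insert.mpr (Or.inr (Finset.mem_insert.mpr (Or.inr
            (h4 b' (Finset.mem_erase.mpr ⟨hbb, hb'⟩)))))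
      · intro A hA hA2
        rcases Finset.mem_insert.mp hA with rfl | hA
        · refine ⟨{b}, ?_, A.erase b, ?_, ?_, ?_, Finset.singleton_nonempty _, hB'ne⟩
          · exact Finset.mem_insert.mpr (Or.inr (Finset.mem_insert_self _ _))
          · exact Finset.mem_insert.mpr (Or.inr (Finset.mem_insert.mpr (Or.inr h1)))
          · exact Finset.disjoint_singleton_left.mpr (Finset.notMem_erase b A)
          · ext x
            simp only [Finset.mem_union, Finset.mem_singleton, Finset.mem_erase]
            constructor
            · rintro (rfl | ⟨-, h⟩)
              · exact hb
              · exact h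
            · intro hx
              by_cases hxb : x = b
              · exact Or.inl hxb
              · exact Or.inr ⟨hxb, hx⟩
        rcases Finset.mem_insert.mp hA with rfl | hA
        · simp at hA2
        · obtain ⟨C, hC, D, hD, hprops⟩ := h5 A hA hA2
          exact ⟨C, Finset.mem_insert.mpr (Or.inr (Finset.mem_insert.mpr (Or.inr hC))),
            D, Finset.mem_insert.mpr (Or.inr (Finset.mem_insert.mpr (Or.inr hD))), hprops⟩

lemma mem_allBinFrags {B : Finset ℕ} {t : Finset (Finset ℕ)} :
    t ∈ allBinFrags B ↔ IsBinFrag B t := by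
  classical
  rw [allBinFrags]
  simp only [Finset.mem_filter, Finset.mem_powerset]
  constructor
  · exact fun h => h.2
  · intro h
    refine ⟨?_, h⟩
    intro A hA
    exact Finset.mem_powerset.mpr (h.2.1 A hA).2

lemma telescope (ψ w : ℕ → ℝ) (hψ1 : ψ 1 = 1) (hw1 : w 1 = 1)
    (hwne : ∀ m : ℕ, 1 ≤ m → w m ≠ 0) :
    ∀ N : ℕ, ∀ B : Finset ℕ, ∀ t : Finset (Finset ℕ),
      ∀ ch : Finset ℕ → Finset ℕ × Finset ℕ,
      B.card ≤ N → IsBinFrag B t → IsChildFun t ch → B.Nonempty →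
      ∏ A ∈ t.filter (fun A => 2 ≤ A.card),
        (w (ch A).1.card * w (ch A).2.card * ψ A.card / w A.card)
      = (∏ A ∈ t, ψ A.card) / w B.card := by
  intro N
  induction N with
  | zero =>
    intro B t ch hN _ _ hne
    exact absurd (Finset.card_pos.mpr hne) (by omega)
  | succ N ih =>
    intro B t ch hN hfrag hch hne
    obtain ⟨hBt, hmem, hlam, hsing, hsplit⟩ := hfrag
    by_cases hc1 : B.card = 1
    · have ht : t = {B} := by
        apply Finset.Subset.antisymm
        · intro A hA
          rw [Finset.mem_singleton]
          have h1 := (hmem A hA).2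
          have h2 := Finset.card_pos.mpr (hmem A hA).1
          exact Finset.eq_of_subset_of_card_le h1 (by omega)
        · simpa using hBt
      rw [ht, Finset.filter_singleton, if_neg (by omega), Finset.prod_empty,
        Finset.prod_singleton, hc1, hψ1, hw1, div_one]
    · have hc2 : 2 ≤ B.card := by
        have := Finset.card_pos.mpr hne; omega
      obtain ⟨hC, hD, hCD, hunion, hCne, hDne⟩ := hch B hBt hc2
      have hCB : (ch B).1 ⊆ B := by
        have h := Finset.subset_union_left (s₁ := (ch B).1) (s₂ := (ch B).2)
        rwa [hunion] at h
      have hDB : (ch B).2 ⊆ B := by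
        have h := Finset.subset_union_right (s₁ := (ch B).1) (s₂ := (ch B).2)
        rwa [hunion] at h
      have hCltB : (ch B).1.card < B.card := by
        apply Finset.card_lt_card
        rw [Finset.ssubset_iff_of_subset hCB]
        obtain ⟨d, hd⟩ := hDne
        exact ⟨d, hDB hd, fun h => Finset.disjoint_left.mp hCD h hd⟩
      have hDltB : (ch B).2.card < B.card := by
        apply Finset.card_lt_card
        rw [Finset.ssubset_iff_of_subset hDB]
        obtain ⟨c, hc⟩ := hCne
        exact ⟨c, hCB hc, fun h => Finset.disjoint_left.mp hCD hc h⟩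
      set t₁ := t.filter (fun A => A ⊆ (ch B).1) with ht₁
      set t₂ := t.filter (fun A => A ⊆ (ch B).2) with ht₂
      have hchsub : ∀ A ∈ t, 2 ≤ A.card → (ch A).1 ⊆ A ∧ (ch A).2 ⊆ A := by
        intro A hA hA2
        obtain ⟨-, -, -, h4, -, -⟩ := hch A hA hA2
        constructor
        · have h := Finset.subset_union_left (s₁ := (ch A).1) (s₂ := (ch A).2)
          rwa [h4] at h
        · have h := Finset.subset_union_right (s₁ := (ch A).1) (s₂ := (ch A).2)
          rwa [h4] at h
      have hfrag₁ : IsBinFrag (ch B).1 t₁ := by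
        refine ⟨Finset.mem_filter.mpr ⟨hC, subset_rfl⟩, ?_, ?_, ?_, ?_⟩
        · intro A hA
          obtain ⟨hAt, hAC⟩ := Finset.mem_filter.mp hA
          exact ⟨(hmem A hAt).1, hAC⟩
        · intro C' hC' D' hD'
          exact hlam C' (Finset.mem_filter.mp hC').1 D' (Finset.mem_filter.mp hD').1
        · intro b hb
          exact Finset.mem_filter.mpr ⟨hsing b (hCB hb), Finset.singleton_subset_iff.mpr hb⟩
        · intro A hA hA2
          obtain ⟨hAt, hAC⟩ := Finset.mem_filter.mp hA
          obtain ⟨h1, h2, h3, h4, h5, h6⟩ := hch A hAt hA2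
          obtain ⟨hs1, hs2⟩ := hchsub A hAt hA2
          exact ⟨(ch A).1, Finset.mem_filter.mpr ⟨h1, hs1.trans hAC⟩,
            (ch A).2, Finset.mem_filter.mpr ⟨h2, hs2.trans hAC⟩, h3, h4, h5, h6⟩
      have hfrag₂ : IsBinFrag (ch B).2 t₂ := by
        refine ⟨Finset.mem_filter.mpr ⟨hD, subset_rfl⟩, ?_, ?_, ?_, ?_⟩
        · intro A hA
          obtain ⟨hAt, hAD⟩ := Finset.mem_filter.mp hA
          exact ⟨(hmem A hAt).1, hAD⟩
        · intro C' hC' D' hD'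
          exact hlam C' (Finset.mem_filter.mp hC').1 D' (Finset.mem_filter.mp hD').1
        · intro b hb
          exact Finset.mem_filter.mpr ⟨hsing b (hDB hb), Finset.singleton_subset_iff.mpr hb⟩
        · intro A hA hA2
          obtain ⟨hAt, hAD⟩ := Finset.mem_filter.mp hA
          obtain ⟨h1, h2, h3, h4, h5, h6⟩ := hch A hAt hA2
          obtain ⟨hs1, hs2⟩ := hchsub A hAt hA2
          exact ⟨(ch A).1, Finset.mem_filter.mpr ⟨h1, hs1.trans hAD⟩,
            (ch A).2, Finset.mem_filter.mpr ⟨h2, hs2.trans hAD⟩, h3, h4, h5, h6⟩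
      have hch₁ : IsChildFun t₁ ch := by
        intro A hA hA2
        obtain ⟨hAt, hAC⟩ := Finset.mem_filter.mp hA
        obtain ⟨h1, h2, h3, h4, h5, h6⟩ := hch A hAt hA2
        obtain ⟨hs1, hs2⟩ := hchsub A hAt hA2
        exact ⟨Finset.mem_filter.mpr ⟨h1, hs1.trans hAC⟩,
          Finset.mem_filter.mpr ⟨h2, hs2.trans hAC⟩, h3, h4, h5, h6⟩
      have hch₂ : IsChildFun t₂ ch := by
        intro A hA hA2
        obtain ⟨hAt, hAD⟩ := Finset.mem_filter.mp hA
        obtain ⟨h1, h2, h3, h4, h5, h6⟩ := hch A hAt hA2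
        obtain ⟨hs1, hs2⟩ := hchsub A hAt hA2
        exact ⟨Finset.mem_filter.mpr ⟨h1, hs1.trans hAD⟩,
          Finset.mem_filter.mpr ⟨h2, hs2.trans hAD⟩, h3, h4, h5, h6⟩
      have hBt₁ : B ∉ t₁ := by
        rw [ht₁, Finset.mem_filter]
        rintro ⟨-, hsub⟩
        obtain ⟨d, hd⟩ := hDne
        exact Finset.disjoint_left.mp hCD (hsub (hDB hd)) hd
      have hBt₂ : B ∉ t₂ := by
        rw [ht₂, Finset.mem_filter]
        rintro ⟨-, hsub⟩
        obtain ⟨c, hc⟩ := hCne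
        exact Finset.disjoint_left.mp hCD hc (hsub (hCB hc))
      have hdisj12 : Disjoint t₁ t₂ := by
        rw [Finset.disjoint_left]
        intro A hA1 hA2
        obtain ⟨hAt, hAC⟩ := Finset.mem_filter.mp hA1
        obtain ⟨-, hAD⟩ := Finset.mem_filter.mp hA2
        obtain ⟨a, ha⟩ := (hmem A hAt).1
        exact Finset.disjoint_left.mp hCD (hAC ha) (hAD ha)
      have hdecomp : t = insert B (t₁ ∪ t₂) := by
        apply Finset.Subset.antisymm
        · intro A hA
          rw [Finset.mem_insert, Finset.mem_union]
          by_cases hAB : A = B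
          · exact Or.inl hAB
          refine Or.inr ?_
          rcases hlam A hA _ hC with h | h | h
          · exact Or.inl (Finset.mem_filter.mpr ⟨hA, h⟩)
          · rcases hlam A hA _ hD with h' | h' | h'
            · obtain ⟨c, hc⟩ := hCne
              exact (Finset.disjoint_left.mp hCD hc (h' (h hc))).elim
            · have hBA : B ⊆ A := by
                rw [← hunion]; exact Finset.union_subset h h'
              exact (hAB (Finset.Subset.antisymm ((hmem A hA).2) hBA)).elim
            · refine Or.inl (Finset.mem_filter.mpr ⟨hA, ?_⟩)
              intro a ha
              have haB := (hmem A hA).2 ha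
              rw [← hunion, Finset.mem_union] at haB
              rcases haB with h'' | h''
              · exact h''
              · exact (Finset.disjoint_left.mp h' ha h'').elim
          · refine Or.inr (Finset.mem_filter.mpr ⟨hA, ?_⟩)
            intro a ha
            have haB := (hmem A hA).2 ha
            rw [← hunion, Finset.mem_union] at haB
            rcases haB with h'' | h''
            · exact (Finset.disjoint_left.mp h ha h'').elim
            · exact h''
        · intro A hA
          rw [Finset.mem_insert, Finset.mem_union] at hA
          rcases hA with rfl | h | h
          · exact hBt
          · exact (Finset.mem_filter.mp h).1
          · exact (Finset.mem_filter.mp h).1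
      have ihC := ih (ch B).1 t₁ ch (by omega) hfrag₁ hch₁ hCne
      have ihD := ih (ch B).2 t₂ ch (by omega) hfrag₂ hch₂ hDne
      have hBnotun : B ∉ t₁ ∪ t₂ := by
        rw [Finset.mem_union]; rintro (h | h)
        · exact hBt₁ h
        · exact hBt₂ h
      have hBnotfil : B ∉ (t₁.filter (fun A => 2 ≤ A.card)) ∪ (t₂.filter (fun A => 2 ≤ A.card)) := by
        rw [Finset.mem_union]; rintro (h | h)
        · exact hBt₁ (Finset.mem_filter.mp h).1
        · exact hBt₂ (Finset.mem_filter.mp h).1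
      rw [hdecomp, Finset.filter_insert, if_pos hc2, Finset.filter_union,
        Finset.prod_insert hBnotfil,
        Finset.prod_union (Finset.disjoint_filter_filter hdisj12),
        Finset.prod_insert hBnotun, Finset.prod_union hdisj12, ihC, ihD]
      have hCcard : (1:ℕ) ≤ (ch B).1.card := Finset.card_pos.mpr hCne
      have hDcard : (1:ℕ) ≤ (ch B).2.card := Finset.card_pos.mpr hDne
      have hBcard : (1:ℕ) ≤ B.card := by omega
      have h1 := hwne _ hCcard
      have h2 := hwne _ hDcard
      have h3 := hwne _ hBcard
      field_simp

/-- the Gibbs tree model `P(T = t) = (1/w n) ∏_{A ∈ t} ψ(#A)` is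
Markovian with splitting rule of Gibbs form `p i j = w i * w j / Z (i+j)`,
`Z m = w m / ψ m`; i.e. the normalized ψ-product equals the Markovian product
of splitting probabilities over internal vertices. -/
theorem gibbs_tree_model_is_markovian
    (ψ : ℕ → ℝ) (hψ : ∀ j : ℕ, 1 ≤ j → 0 < ψ j) (hψ1 : ψ 1 = 1)
    (w : ℕ → ℝ)
    (hw : ∀ n : ℕ, 1 ≤ n →
      w n = ∑ t ∈ allBinFrags (Finset.Icc 1 n), ∏ A ∈ t, ψ A.card)
    (Z : ℕ → ℝ) (hZ : ∀ m : ℕ, 2 ≤ m → Z m = w m / ψ m)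
    (p : ℕ → ℕ → ℝ)
    (hp : ∀ i j : ℕ, 1 ≤ i → 1 ≤ j → p i j = w i * w j / Z (i + j)) :
    ∀ n : ℕ, 1 ≤ n → ∀ t ∈ allBinFrags (Finset.Icc 1 n),
      ∀ ch : Finset ℕ → Finset ℕ × Finset ℕ, IsChildFun t ch →
        (1 / w n) * ∏ A ∈ t, ψ A.card =
          ∏ A ∈ t.filter (fun A => 2 ≤ A.card), p (ch A).1.card (ch A).2.card := by
  have hwpos : ∀ m : ℕ, 1 ≤ m → 0 < w m := by
    intro m hm
    rw [hw m hm]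
    obtain ⟨t, ht⟩ := exists_binfrag (Finset.Icc 1 m) (Finset.nonempty_Icc.mpr hm)
    apply Finset.sum_pos
    · intro s hs
      have hs' : IsBinFrag (Finset.Icc 1 m) s := mem_allBinFrags.mp hs
      apply Finset.prod_pos
      intro A hA
      exact hψ A.card (Finset.card_pos.mpr (hs'.2.1 A hA).1)
    · exact ⟨t, mem_allBinFrags.mpr ht⟩
  have hwne : ∀ m : ℕ, 1 ≤ m → w m ≠ 0 := fun m hm => (hwpos m hm).ne'
  have hfr1 : allBinFrags (Finset.Icc 1 1) = {{{1}}} := by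
    ext s
    rw [mem_allBinFrags, Finset.mem_singleton, Finset.Icc_self]
    constructor
    · intro hfrag
      apply Finset.Subset.antisymm
      · intro A hA
        rw [Finset.mem_singleton]
        have hA1 := (hfrag.2.1 A hA).2
        have hAne := (hfrag.2.1 A hA).1
        rcases Finset.subset_singleton_iff.mp hA1 with h | h
        · exact absurd h hAne.ne_empty
        · exact h
      · rw [Finset.singleton_subset_iff]; exact hfrag.1
    · rintro rfl
      exact binfrag_singleton 1
  have hw1 : w 1 = 1 := by
    rw [hw 1 le_rfl, hfr1, Finset.sum_singleton, Finset.prod_singleton,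
      Finset.card_singleton, hψ1]
  intro n hn t ht ch hch
  have hfrag : IsBinFrag (Finset.Icc 1 n) t := mem_allBinFrags.mp ht
  have hne : (Finset.Icc 1 n).Nonempty := Finset.nonempty_Icc.mpr hn
  have hcard : (Finset.Icc 1 n).card = n := by rw [Nat.card_Icc]; omega
  have key := telescope ψ w hψ1 hw1 hwne (Finset.Icc 1 n).card (Finset.Icc 1 n) t ch
    le_rfl hfrag hch hne
  have hprod : ∏ A ∈ t.filter (fun A => 2 ≤ A.card), p (ch A).1.card (ch A).2.card
      = ∏ A ∈ t.filter (fun A => 2 ≤ A.card),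
          (w (ch A).1.card * w (ch A).2.card * ψ A.card / w A.card) := by
    apply Finset.prod_congr rfl
    intro A hA
    obtain ⟨hAt, hA2⟩ := Finset.mem_filter.mp hA
    obtain ⟨h1, h2, h3, h4, h5, h6⟩ := hch A hAt hA2
    have hi : 1 ≤ (ch A).1.card := Finset.card_pos.mpr h5
    have hj : 1 ≤ (ch A).2.card := Finset.card_pos.mpr h6
    have hsum : (ch A).1.card + (ch A).2.card = A.card := by
      rw [← Finset.card_union_of_disjoint h3, h4]
    rw [hp _ _ hi hj, hZ _ (by omega), hsum, div_div_eq_mul_div]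
  rw [hprod, key, hcard]
  ring
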